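/- Let {b_n}, {d_n} be positive integer sequences with 1 < d_n < b_n and 2 ≤ b_n/d_n ∈ ℤ, and let ρ_n = ∏_{j<n}b_j. Then the set Λ = ⋃_{L=1}^∞ ( {∑_{n=1}^L a_n ρ_n : a_n ∈ ℤ, 0 ≤ a_n < d_n} ) has the property that for any two distinct λ, λ' ∈ Λ, the difference λ - λ' is a nonzero integer and the Riesz product Fourier transform μ̂(λ - λ') = ∏_{n=1}^∞ H_{d_n}((λ-λ')/(d_n ρ_n)) vanishes, where H_m(ξ) = (1/m)∑_{j=0}^{m-1}e^{-2πijξ}. -/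

import Mathlib

/-- The Dirichlet-type kernel `H_m(ξ) = (1/m) ∑_{j=0}^{m-1} e^{-2πijξ}`. -/
noncomputable def Hker (m : ℕ) (ξ : ℝ) : ℂ :=
  (1 / m : ℂ) * ∑ j ∈ Finset.range m, Complex.exp (-2 * Real.pi * Complex.I * j * ξ)

open Finset in

private theorem key (b d : ℕ → ℕ)
    (h1 : ∀ n, 1 < d n) (h2 : ∀ n, d n < b n)
    (h3 : ∀ n, d n ∣ b n)
    (ρ : ℕ → ℕ) (hρ : ∀ n, ρ n = ∏ j ∈ Finset.range n, b j)
    (L L' : ℕ) (a a' : ℕ → ℕ) (ha : ∀ n < L, a n < d n) (ha' : ∀ n < L', a' n < d n)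
    (hne : (∑ n ∈ Finset.range L, (a n : ℝ) * ρ n) ≠ ∑ n ∈ Finset.range L', (a' n : ℝ) * ρ n) :
    ∃ (n₀ : ℕ) (S : ℤ), S ≠ 0 ∧ ¬ (d n₀ : ℤ) ∣ S ∧
      (∑ n ∈ Finset.range L, (a n : ℝ) * ρ n) - (∑ n ∈ Finset.range L', (a' n : ℝ) * ρ n)
        = (ρ n₀ : ℝ) * S := by
  have hbpos : ∀ n, 0 < b n := fun n => (h1 n).trans (h2 n) |>.trans_le (le_refl _) |> Nat.zero_lt_of_lt
  have hρpos : ∀ n, 0 < ρ n := by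
    intro n; rw [hρ]; exact Finset.prod_pos fun j _ => hbpos j
  set N := max L L' with hN
  set A : ℕ → ℕ := fun n => if n < L then a n else 0 with hA
  set A' : ℕ → ℕ := fun n => if n < L' then a' n else 0 with hA'
  have hAd : ∀ n, A n < d n := by
    intro n; rw [hA]; dsimp only
    split
    · exact ha n ‹_›
    · exact Nat.zero_lt_of_lt (h1 n)
  have hAd' : ∀ n, A' n < d n := by
    intro n; rw [hA']; dsimp only
    split
    · exact ha' n ‹_›
    · exact Nat.zero_lt_of_lt (h1 n)
  have hsum1 : ∑ n ∈ range L, (a n : ℝ) * ρ n = ∑ n ∈ range N, (A n : ℝ) * ρ n := by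
    rw [← Finset.sum_subset (Finset.range_subset_range.2 (le_max_left L L'))]
    · apply Finset.sum_congr rfl
      intro n hn
      rw [hA]; simp only [Finset.mem_range.1 hn, if_true]
    · intro n _ hn
      have h : ¬ n < L := fun h => hn (Finset.mem_range.2 h)
      rw [hA]; simp [h]
  have hsum2 : ∑ n ∈ range L', (a' n : ℝ) * ρ n = ∑ n ∈ range N, (A' n : ℝ) * ρ n := by
    rw [← Finset.sum_subset (Finset.range_subset_range.2 (le_max_right L L'))]
    · apply Finset.sum_congr rfl
      intro n hn
      rw [hA']; simp only [Finset.mem_range.1 hn, if_true]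
    · intro n _ hn
      have h : ¬ n < L' := fun h => hn (Finset.mem_range.2 h)
      rw [hA']; simp [h]
  set c : ℕ → ℤ := fun n => (A n : ℤ) - (A' n : ℤ) with hc
  set δ : ℤ := ∑ n ∈ range N, c n * ρ n with hδ
  have hdiff : (∑ n ∈ Finset.range L, (a n : ℝ) * ρ n)
      - (∑ n ∈ Finset.range L', (a' n : ℝ) * ρ n) = (δ : ℝ) := by
    rw [hsum1, hsum2, hδ, ← Finset.sum_sub_distrib]
    push_cast
    apply Finset.sum_congr rfl
    intro n _
    rw [hc]; push_cast; ring
  have hδne : δ ≠ 0 := by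
    intro h
    apply hne
    have : (∑ n ∈ Finset.range L, (a n : ℝ) * ρ n)
      - (∑ n ∈ Finset.range L', (a' n : ℝ) * ρ n) = 0 := by rw [hdiff, h]; simp
    linarith
  have hex : ∃ n, c n ≠ 0 := by
    by_contra h
    push_neg at h
    apply hδne
    rw [hδ]
    exact Finset.sum_eq_zero fun n _ => by rw [h n, zero_mul]
  classical
  set n₀ := Nat.find hex with hn₀
  have hc0 : c n₀ ≠ 0 := Nat.find_spec hex
  have hmin : ∀ m < n₀, c m = 0 := by
    intro m hm
    by_contra h
    exact absurd (Nat.find_min' hex h) (by omega)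
  have hn₀N : n₀ < N := by
    by_contra h
    push_neg at h
    apply hδne
    rw [hδ]
    apply Finset.sum_eq_zero
    intro n hn
    rw [hmin n (lt_of_lt_of_le (Finset.mem_range.1 hn) h), zero_mul]
  -- δ = ρ n₀ * S
  set S : ℤ := ∑ n ∈ Finset.Ico n₀ N, c n * ∏ j ∈ Finset.Ico n₀ n, (b j : ℤ) with hS
  have hδS : δ = (ρ n₀ : ℤ) * S := by
    rw [hδ, hS, Finset.mul_sum]
    rw [Finset.range_eq_Ico, ← Finset.sum_Ico_consecutive _ (Nat.zero_le n₀) hn₀N.le]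
    have hz : ∑ n ∈ Finset.Ico 0 n₀, c n * ρ n = 0 :=
      Finset.sum_eq_zero fun n hn => by
        rw [hmin n (Finset.mem_Ico.1 hn).2, zero_mul]
    rw [hz, zero_add]
    apply Finset.sum_congr rfl
    intro n hn
    have hn' := (Finset.mem_Ico.1 hn).1
    have : (ρ n : ℤ) = (ρ n₀ : ℤ) * ∏ j ∈ Finset.Ico n₀ n, (b j : ℤ) := by
      rw [hρ n, hρ n₀]
      push_cast
      rw [Finset.range_eq_Ico,
        ← Finset.prod_Ico_consecutive _ (Nat.zero_le n₀) hn', ← Finset.range_eq_Ico]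
    rw [this]; ring
  -- d n₀ ∣ S - c n₀
  have htail : (d n₀ : ℤ) ∣ S - c n₀ := by
    have hsplit : S = c n₀ + ∑ n ∈ Finset.Ico (n₀ + 1) N, c n * ∏ j ∈ Finset.Ico n₀ n, (b j : ℤ) := by
      rw [hS, Finset.sum_eq_sum_Ico_succ_bot hn₀N]
      simp
    rw [hsplit, add_sub_cancel_left]
    apply Finset.dvd_sum
    intro n hn
    have hn' := (Finset.mem_Ico.1 hn).1
    have hb : (∏ j ∈ Finset.Ico n₀ n, (b j : ℤ)) = (b n₀ : ℤ) * ∏ j ∈ Finset.Ico (n₀ + 1) n, (b j : ℤ) := by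
      rw [← Finset.prod_Ico_consecutive _ (Nat.le_succ n₀) (by omega : n₀ + 1 ≤ n)]
      congr 1
      rw [show Finset.Ico n₀ n₀.succ = {n₀} by rw [Nat.succ_eq_add_one, Finset.Ico_add_one_right_eq_Icc, Finset.Icc_self],
        Finset.prod_singleton]
    rw [hb]
    exact Dvd.dvd.mul_left (Dvd.dvd.mul_right (Int.natCast_dvd_natCast.2 (h3 n₀)) _) _
  have hndvd : ¬ (d n₀ : ℤ) ∣ S := by
    intro hdvd
    have hcd : (d n₀ : ℤ) ∣ c n₀ := by
      have := dvd_sub hdvd htail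
      simpa using this
    have habs : |c n₀| < (d n₀ : ℤ) := by
      rw [hc]
      have := hAd n₀; have := hAd' n₀
      dsimp only
      rw [abs_lt]
      omega
    exact hc0 (Int.eq_zero_of_abs_lt_dvd hcd habs)
  have hSne : S ≠ 0 := fun h => hndvd (h ▸ dvd_zero _)
  exact ⟨n₀, S, hSne, hndvd, by rw [hdiff, hδS]; push_cast; ring⟩

private lemma tprod_zero_of_zero {f : ℕ → ℂ} {n₀ : ℕ} (h : f n₀ = 0) : ∏' n, f n = 0 := by
  have hp : HasProd f 0 := by
    apply Filter.Tendsto.congr' _ tendsto_const_nhds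
    filter_upwards [Filter.eventually_ge_atTop ({n₀} : Finset ℕ)] with s hs
    exact (Finset.prod_eq_zero (hs (Finset.mem_singleton_self n₀)) h).symm
  exact hp.tprod_eq

private lemma Hker_zero (m : ℕ) (S : ℤ) (ξ : ℝ) (hm : 0 < m) (hξ : ξ = (S : ℝ) / m)
    (hndvd : ¬ (m : ℤ) ∣ S) : Hker m ξ = 0 := by
  have hmC : (m : ℂ) ≠ 0 := Nat.cast_ne_zero.2 hm.ne'
  have hξC : (ξ : ℂ) = (S : ℂ) / m := by rw [hξ]; push_cast; ring
  set z : ℂ := Complex.exp (-2 * Real.pi * Complex.I * ξ) with hz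
  have hterm : ∀ j ∈ Finset.range m,
      Complex.exp (-2 * Real.pi * Complex.I * j * (ξ : ℝ)) = z ^ j := by
    intro j _
    rw [hz, ← Complex.exp_nat_mul]
    ring_nf
  rw [Hker, Finset.sum_congr rfl hterm]
  have hmξ : (m : ℂ) * ξ = (S : ℂ) := by rw [hξC]; field_simp
  have hz1 : z ≠ 1 := by
    intro h
    rw [hz, Complex.exp_eq_one_iff] at h
    obtain ⟨n, hn⟩ := h
    have hπ : (Real.pi : ℂ) ≠ 0 := Complex.ofReal_ne_zero.2 Real.pi_ne_zero
    have h2 : (ξ : ℂ) = -n := by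
      have hne : (-2 * (Real.pi : ℂ) * Complex.I) ≠ 0 := by
        simp [Real.pi_ne_zero, Complex.I_ne_zero]
      apply mul_left_cancel₀ hne
      linear_combination hn
    apply hndvd
    refine ⟨-n, ?_⟩
    have : (S : ℂ) = (m : ℂ) * (-n : ℤ) := by rw [← hmξ, h2]; push_cast; ring
    exact_mod_cast this
  have hzm : z ^ m = 1 := by
    rw [hz, ← Complex.exp_nat_mul]
    have h5 : (m : ℂ) * (-2 * Real.pi * Complex.I * ξ) = (-S : ℤ) * (2 * Real.pi * Complex.I) := by
      push_cast
      linear_combination (-2 * (Real.pi:ℂ) * Complex.I) * hmξ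
    rw [h5, Complex.exp_int_mul_two_pi_mul_I]
  rw [geom_sum_eq hz1, hzm]
  simp

/-- for distinct `λ, λ'` in the candidate spectrum
`Λ = ⋃_L {∑_{n=1}^L aₙρₙ : 0 ≤ aₙ < dₙ}`, the difference `λ - λ'` is a nonzero
integer at which the Riesz product Fourier transform vanishes. -/
theorem stmt12 (b d : ℕ → ℕ)
    (h1 : ∀ n, 1 < d n) (h2 : ∀ n, d n < b n)
    (h3 : ∀ n, d n ∣ b n) (h4 : ∀ n, 2 ≤ b n / d n)
    (ρ : ℕ → ℕ) (hρ : ∀ n, ρ n = ∏ j ∈ Finset.range n, b j)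
    (Λ : Set ℝ)
    (hΛ : Λ = {x : ℝ | ∃ (L : ℕ) (a : ℕ → ℕ), (∀ n < L, a n < d n) ∧
        x = ∑ n ∈ Finset.range L, (a n : ℝ) * ρ n}) :
    ∀ lam ∈ Λ, ∀ lam' ∈ Λ, lam ≠ lam' →
      (∃ m : ℤ, m ≠ 0 ∧ lam - lam' = (m : ℝ)) ∧
      (∏' n : ℕ, Hker (d n) ((lam - lam') / (d n * ρ n))) = 0 := by
  subst hΛ
  rintro lam ⟨L, a, ha, rfl⟩ lam' ⟨L', a', ha', rfl⟩ hne
  obtain ⟨n₀, S, hSne, hndvd, hdiff⟩ := key b d h1 h2 h3 ρ hρ L L' a a' ha ha' hne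
  have hρpos : 0 < ρ n₀ := by
    rw [hρ]
    exact Finset.prod_pos fun j _ => Nat.zero_lt_of_lt ((h1 j).trans (h2 j))
  have hdpos : 0 < d n₀ := Nat.zero_lt_of_lt (h1 n₀)
  constructor
  · refine ⟨(ρ n₀ : ℤ) * S, ?_, by rw [hdiff]; push_cast; ring⟩
    exact mul_ne_zero (Int.natCast_ne_zero.2 hρpos.ne') hSne
  · apply tprod_zero_of_zero (n₀ := n₀)
    apply Hker_zero (d n₀) S _ hdpos _ hndvd
    rw [hdiff]
    have h1' : (ρ n₀ : ℝ) ≠ 0 := Nat.cast_ne_zero.2 hρpos.ne'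
    have h2' : (d n₀ : ℝ) ≠ 0 := Nat.cast_ne_zero.2 hdpos.ne'
    field_simp
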